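/- arXiv:1711.09423 — 3 statements merged into one kernel-verified Lean document; each statement's English description precedes it below -/
import Mathlib

section
/- Let X be a metric space, p ∈ X and x : Fin n → X. Suppose the point array (p, x₁, …, xₙ) satisfies the monopolar (star) tree comparison: there exist p̃ ∈ H and x̃ : Fin n → H with dist p̃ (x̃ i) = dist p (x i) for every i and dist (x i) (x j) ≤ dist (x̃ i) (x̃ j) for all i, j. Then for every s : Fin n → ℝ with s i ≥ 0 for all i, one has ∑_{i} ∑_{j} s i · s j · ( (dist (x i) p)² + (dist (x j) p)² − (dist (x i) (x j))² ) / 2 ≥ 0. -/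
noncomputable section
open RealInnerProductSpace

/-- The real Hilbert space ℓ²(ℕ, ℝ). -/
abbrev H : Type := lp (fun _ : ℕ => ℝ) 2

/-- If the array `(p, x₁, …, xₙ)` satisfies the monopolar (star) tree comparison, then the
associated Gram-type matrix `m i j = ½(dist(xᵢ,p)² + dist(xⱼ,p)² − dist(xᵢ,xⱼ)²)` satisfies
`s ⬝ M ⬝ sᵀ ≥ 0` for every vector `s` with nonnegative components. -/
theorem monopolar_comparison_matrix_inequality
    {X : Type*} [MetricSpace X] {n : ℕ} (p : X) (x : Fin n → X)
    (h : ∃ (pt : H) (xt : Fin n → H),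
      (∀ i, dist pt (xt i) = dist p (x i)) ∧
      ∀ i j, dist (x i) (x j) ≤ dist (xt i) (xt j))
    (s : Fin n → ℝ) (hs : ∀ i, 0 ≤ s i) :
    0 ≤ ∑ i, ∑ j, s i * s j *
      ((dist (x i) p ^ 2 + dist (x j) p ^ 2 - dist (x i) (x j) ^ 2) / 2) := by
  obtain ⟨pt, xt, hd, hle⟩ := h
  set v : Fin n → H := fun i => xt i - pt with hv
  have hnorm : ∀ i, ‖v i‖ = dist p (x i) := by
    intro i
    rw [← hd i, dist_eq_norm, ← norm_neg]
    simp [hv]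
  have hsub : ∀ i j, ‖v i - v j‖ = dist (xt i) (xt j) := by
    intro i j
    rw [dist_eq_norm]
    congr 1
    simp [hv]
  have inner_eq : ∀ i j, (inner ℝ (v i) (v j) : ℝ) =
      (‖v i‖ ^ 2 + ‖v j‖ ^ 2 - ‖v i - v j‖ ^ 2) / 2 := by
    intro i j
    have := @norm_sub_sq_real H _ _ (v i) (v j)
    linarith
  have step : ∀ i j, s i * s j * (inner ℝ (v i) (v j) : ℝ) ≤ s i * s j *
      ((dist (x i) p ^ 2 + dist (x j) p ^ 2 - dist (x i) (x j) ^ 2) / 2) := by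
    intro i j
    apply mul_le_mul_of_nonneg_left _ (mul_nonneg (hs i) (hs j))
    rw [inner_eq i j, hnorm i, hnorm j, hsub i j, dist_comm (x i) p, dist_comm (x j) p]
    have h1 := hle i j
    have h2 : dist (x i) (x j) ^ 2 ≤ dist (xt i) (xt j) ^ 2 :=
      pow_le_pow_left₀ dist_nonneg h1 2
    linarith
  calc 0 ≤ (inner ℝ (∑ i, s i • v i) (∑ j, s j • v j) : ℝ) := real_inner_self_nonneg
    _ = ∑ i, ∑ j, s i * s j * (inner ℝ (v i) (v j) : ℝ) := by
        rw [inner_sum]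
        refine Finset.sum_congr rfl fun i _ => ?_
        rw [sum_inner]
        refine Finset.sum_congr rfl fun j _ => ?_
        rw [real_inner_smul_left, real_inner_smul_right, real_inner_comm (v j) (v i)]
        ring
    _ ≤ _ := Finset.sum_le_sum fun i _ => Finset.sum_le_sum fun j _ => step i j
end
end

section
/- (Kirszbraun rigidity, Euclidean case.) Let E = EuclideanSpace ℝ (Fin m) and let F be a real Hilbert space (a complete real inner product space). Let p ∈ E, x : Fin n → E, q̃ ∈ F and x̃ : Fin n → F be such that: (1) dist p (x i) ≤ dist q̃ (x̃ i) for every i; (2) dist (x̃ i) (x̃ j) ≤ dist (x i) (x j) for all i, j; and (3) q̃ lies in the intrinsic (relative) interior of the convex hull K̃ of {x̃ 1, …, x̃ n}. Then equality holds in all these inequalities: dist q̃ (x̃ i) = dist p (x i) for all i and dist (x̃ i) (x̃ j) = dist (x i) (x j) for all i, j; moreover there is a map f : F → E that is distance preserving on K̃ (dist (f y) (f z) = dist y z for all y, z ∈ K̃) with f (x̃ i) = x i for every i and f q̃ = p. -/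
noncomputable section

open Finset in
lemma mem_convexHull_range_iff' {n : ℕ} {F : Type*} [AddCommGroup F] [Module ℝ F]
    (xt : Fin n → F) (y : F) :
    y ∈ convexHull ℝ (Set.range xt) ↔
      ∃ w : Fin n → ℝ, (∀ i, 0 ≤ w i) ∧ ∑ i, w i = 1 ∧ ∑ i, w i • xt i = y := by
  constructor
  · intro hy
    obtain ⟨ι, _, w, z, hw0, hw1, hz, hx⟩ := mem_convexHull_iff_exists_fintype.1 hy
    choose k hk using fun i => Set.mem_range.1 (hz i)
    classical
    refine ⟨fun j => ∑ i ∈ univ.filter (fun i => k i = j), w i,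
      fun j => Finset.sum_nonneg fun i _ => hw0 i, ?_, ?_⟩
    · rw [← hw1, Finset.sum_fiberwise]
    · rw [← hx]
      rw [← Finset.sum_fiberwise (univ) (fun i => k i) (fun i => w i • z i)]
      refine Finset.sum_congr rfl fun j _ => ?_
      rw [Finset.sum_smul]
      refine Finset.sum_congr rfl fun i hi => ?_
      rw [Finset.mem_filter] at hi
      rw [← hk i, hi.2]
  · rintro ⟨w, hw0, hw1, rfl⟩
    exact mem_convexHull_of_exists_fintype w xt hw0 hw1 (fun i => Set.mem_range_self i) rfl

lemma exists_pos_weights {n : ℕ} {F : Type*} [NormedAddCommGroup F] [NormedSpace ℝ F]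
    (xt : Fin n → F) (qt : F)
    (h3 : qt ∈ intrinsicInterior ℝ (convexHull ℝ (Set.range xt))) :
    ∃ w : Fin n → ℝ, (∀ i, 0 < w i) ∧ ∑ i, w i = 1 ∧ ∑ i, w i • xt i = qt := by
  classical
  set K := convexHull ℝ (Set.range xt) with hK
  have hqtK : qt ∈ K := intrinsicInterior_subset h3
  have hxtK : ∀ i, xt i ∈ K := fun i => subset_convexHull ℝ _ (Set.mem_range_self i)
  have hqtS : qt ∈ affineSpan ℝ K := subset_affineSpan ℝ K hqtK
  have hxtS : ∀ i, xt i ∈ affineSpan ℝ K := fun i => subset_affineSpan ℝ K (hxtK i)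
  have hn : 0 < n := by
    rcases Nat.eq_zero_or_pos n with h | h
    · subst h
      rw [Set.range_eq_empty, convexHull_empty] at hK
      rw [hK] at hqtK; exact absurd hqtK (Set.notMem_empty qt)
    · exact h
  have key : ∀ i : Fin n, ∃ w : Fin n → ℝ, (∀ j, 0 ≤ w j) ∧ 0 < w i ∧ ∑ j, w j = 1 ∧
      ∑ j, w j • xt j = qt := by
    intro i
    obtain ⟨q', hq'int, hq'⟩ := h3
    set g : ℝ → affineSpan ℝ K := fun s =>
      ⟨s • (qt - xt i) + qt, by
        have := AffineSubspace.smul_vsub_vadd_mem (affineSpan ℝ K) s hqtS (hxtS i) hqtS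
        simpa [vsub_eq_sub, vadd_eq_add] using this⟩ with hg
    have hgc : Continuous g := by
      apply Continuous.subtype_mk
      fun_prop
    have hg0 : g 0 = q' := by
      apply Subtype.ext
      simp [hg, hq']
    have hmem : g ⁻¹' (interior ((↑) ⁻¹' K : Set (affineSpan ℝ K))) ∈ nhds (0:ℝ) := by
      apply hgc.continuousAt.preimage_mem_nhds
      rw [hg0]
      exact isOpen_interior.mem_nhds hq'int
    obtain ⟨ε, hε, hball⟩ := Metric.mem_nhds_iff.1 hmem
    set s := ε/2 with hs
    have hspos : 0 < s := by positivity
    have hsball : s ∈ Metric.ball (0:ℝ) ε := by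
      simp only [Metric.mem_ball, Real.dist_eq, sub_zero, abs_of_pos hspos, hs]
      rw [abs_of_pos (by positivity : (0:ℝ) < ε/2)]
      linarith
    have hyK : s • (qt - xt i) + qt ∈ K := by
      have h := interior_subset (hball hsball)
      exact h
    obtain ⟨ν, hν0, hν1, hνc⟩ := (mem_convexHull_range_iff' xt _).1 hyK
    have h1s : (0:ℝ) < 1 + s := by linarith
    refine ⟨fun j => (1/(1+s)) * ν j + (if j = i then s/(1+s) else 0), ?_, ?_, ?_, ?_⟩
    · intro j
      have h1 : (0:ℝ) ≤ 1/(1+s) * ν j := mul_nonneg (by positivity) (hν0 j)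
      have h2 : (0:ℝ) ≤ s/(1+s) := by positivity
      dsimp only
      split_ifs <;> linarith
    · have hα : (0:ℝ) ≤ 1/(1+s) * ν i := mul_nonneg (by positivity) (hν0 i)
      have hβ : (0:ℝ) < s/(1+s) := by positivity
      dsimp only
      rw [if_pos rfl]
      linarith
    · rw [Finset.sum_add_distrib, ← Finset.mul_sum, hν1, Finset.sum_ite_eq' Finset.univ i]
      simp only [Finset.mem_univ, if_pos]
      field_simp
    · have hone : (s/(1+s)) • xt i = ∑ j, (if j = i then (s/(1+s)) • xt j else 0) := by simp
      have expand : ∑ j, ((1/(1+s)) * ν j + (if j = i then s/(1+s) else 0)) • xt j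
          = (1/(1+s)) • (∑ j, ν j • xt j) + (s/(1+s)) • xt i := by
        rw [Finset.smul_sum, hone, ← Finset.sum_add_distrib]
        refine Finset.sum_congr rfl fun j _ => ?_
        split_ifs with hj
        · subst hj; simp [add_smul, mul_smul]
        · simp [add_smul, mul_smul]
      rw [expand, hνc]
      match_scalars <;> (field_simp; try ring)
  choose W hW0 hWpos hW1 hWc using key
  have hncast : ((n:ℝ)) ≠ 0 := by exact_mod_cast hn.ne'
  refine ⟨fun j => (∑ i, W i j)/n, ?_, ?_, ?_⟩
  · intro j
    have : 0 < ∑ i, W i j :=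
      Finset.sum_pos' (fun i _ => hW0 i j) ⟨j, Finset.mem_univ j, hWpos j⟩
    dsimp only
    positivity
  · rw [← Finset.sum_div, Finset.sum_comm]
    simp only [hW1]
    simp [Finset.sum_const, hncast]
  · calc ∑ j : Fin n, ((∑ i, W i j)/n) • xt j
        = (n:ℝ)⁻¹ • ∑ j : Fin n, ∑ i, W i j • xt j := by
          rw [Finset.smul_sum]
          refine Finset.sum_congr rfl fun j _ => ?_
          rw [div_eq_inv_mul, mul_smul, Finset.sum_smul]
      _ = (n:ℝ)⁻¹ • ∑ i : Fin n, ∑ j, W i j • xt j := by rw [Finset.sum_comm]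
      _ = (n:ℝ)⁻¹ • ∑ _i : Fin n, qt := by simp only [hWc]
      _ = qt := by
          rw [Finset.sum_const, Finset.card_univ, Fintype.card_fin,
            ← Nat.cast_smul_eq_nsmul ℝ, smul_smul, inv_mul_cancel₀ hncast, one_smul]

lemma cross_identity {n : ℕ} {H : Type*} [NormedAddCommGroup H] [InnerProductSpace ℝ H]
    (δ : Fin n → ℝ) (v : Fin n → H) :
    ‖∑ i, δ i • v i‖^2 = ∑ i, ∑ j, δ i * δ j * (inner ℝ (v i) (v j) : ℝ) := by
  rw [← real_inner_self_eq_norm_sq, sum_inner]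
  refine Finset.sum_congr rfl fun i _ => ?_
  rw [real_inner_smul_left, inner_sum, Finset.mul_sum]
  refine Finset.sum_congr rfl fun j _ => ?_
  rw [real_inner_smul_right]; ring

lemma double_sum_identity {n : ℕ} {H : Type*} [NormedAddCommGroup H] [InnerProductSpace ℝ H]
    (w : Fin n → ℝ) (hw1 : ∑ i, w i = 1) (v : Fin n → H) :
    ∑ i, ∑ j, w i * w j * ‖v i - v j‖^2
      = 2 * (∑ i, w i * ‖v i‖^2) - 2 * ‖∑ i, w i • v i‖^2 := by
  have hcross := (cross_identity w v).symm
  have expand : ∀ i, ∑ j, w i * w j * ‖v i - v j‖^2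
      = (w i * ‖v i‖^2) * (∑ j, w j) + w i * (∑ j, w j * ‖v j‖^2)
        - 2 * ∑ j, w i * w j * (inner ℝ (v i) (v j) : ℝ) := by
    intro i
    rw [Finset.mul_sum, Finset.mul_sum, Finset.mul_sum,
      ← Finset.sum_add_distrib, ← Finset.sum_sub_distrib]
    refine Finset.sum_congr rfl fun j _ => ?_
    rw [@norm_sub_sq_real]
    ring
  calc ∑ i, ∑ j, w i * w j * ‖v i - v j‖^2
      = ∑ i, ((w i * ‖v i‖^2) * (∑ j, w j) + w i * (∑ j, w j * ‖v j‖^2)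
          - 2 * ∑ j, w i * w j * (inner ℝ (v i) (v j) : ℝ)) :=
        Finset.sum_congr rfl fun i _ => expand i
    _ = (∑ i, w i * ‖v i‖^2) * (∑ j, w j) + (∑ i, w i) * (∑ j, w j * ‖v j‖^2)
          - 2 * ∑ i, ∑ j, w i * w j * (inner ℝ (v i) (v j) : ℝ) := by
        conv_rhs => rw [Finset.sum_mul, Finset.sum_mul, Finset.mul_sum,
          ← Finset.sum_add_distrib, ← Finset.sum_sub_distrib]
    _ = 2 * (∑ i, w i * ‖v i‖^2) - 2 * ‖∑ i, w i • v i‖^2 := by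
        rw [hcross, hw1]; ring

/-- Kirszbraun rigidity, Euclidean case: if a configuration in a Hilbert space `F` has
longer legs from a point `q̃` in the intrinsic interior of the convex hull of the `x̃ i`
and shorter mutual distances than the configuration `p, x` in Euclidean space, then all
distances agree, and the model configuration maps back isometrically. -/
theorem kirszbraun_rigidity_euclidean
    {m n : ℕ} {F : Type*} [NormedAddCommGroup F] [InnerProductSpace ℝ F] [CompleteSpace F]
    (p : EuclideanSpace ℝ (Fin m)) (x : Fin n → EuclideanSpace ℝ (Fin m))
    (qt : F) (xt : Fin n → F)
    (h1 : ∀ i, dist p (x i) ≤ dist qt (xt i))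
    (h2 : ∀ i j, dist (xt i) (xt j) ≤ dist (x i) (x j))
    (h3 : qt ∈ intrinsicInterior ℝ (convexHull ℝ (Set.range xt))) :
    (∀ i, dist qt (xt i) = dist p (x i)) ∧
    (∀ i j, dist (xt i) (xt j) = dist (x i) (x j)) ∧
    ∃ f : F → EuclideanSpace ℝ (Fin m),
      (∀ y ∈ convexHull ℝ (Set.range xt), ∀ z ∈ convexHull ℝ (Set.range xt),
        dist (f y) (f z) = dist y z) ∧
      (∀ i, f (xt i) = x i) ∧ f qt = p := by
  classical
  obtain ⟨w, hwpos, hw1, hwc⟩ := exists_pos_weights xt qt h3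
  set a : Fin n → F := fun i => xt i - qt with ha
  set b : Fin n → EuclideanSpace ℝ (Fin m) := fun i => x i - p with hb
  have hda : ∀ i, dist qt (xt i) = ‖a i‖ := by
    intro i; simp only [ha]; rw [dist_eq_norm, norm_sub_rev]
  have hdb : ∀ i, dist p (x i) = ‖b i‖ := by
    intro i; simp only [hb]; rw [dist_eq_norm, norm_sub_rev]
  have hdaa : ∀ i j, dist (xt i) (xt j) = ‖a i - a j‖ := by
    intro i j; simp only [ha]; rw [dist_eq_norm, sub_sub_sub_cancel_right]
  have hdbb : ∀ i j, dist (x i) (x j) = ‖b i - b j‖ := by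
    intro i j; simp only [hb]; rw [dist_eq_norm, sub_sub_sub_cancel_right]
  have h1' : ∀ i, ‖b i‖ ≤ ‖a i‖ := fun i => by rw [← hda, ← hdb]; exact h1 i
  have h2' : ∀ i j, ‖a i - a j‖ ≤ ‖b i - b j‖ := fun i j => by
    rw [← hdaa, ← hdbb]; exact h2 i j
  have hwa : ∑ i, w i • a i = 0 := by
    have : ∑ i, w i • a i = (∑ i, w i • xt i) - (∑ i, w i) • qt := by
      rw [Finset.sum_smul, ← Finset.sum_sub_distrib]
      refine Finset.sum_congr rfl fun i _ => ?_
      simp only [ha]; rw [smul_sub]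
    rw [this, hwc, hw1, one_smul, sub_self]
  have idA := double_sum_identity w hw1 a
  have idB := double_sum_identity w hw1 b
  rw [hwa, norm_zero] at idA
  -- chain of inequalities
  have step1 : ∑ i, ∑ j, w i * w j * ‖a i - a j‖^2 ≤ ∑ i, ∑ j, w i * w j * ‖b i - b j‖^2 := by
    refine Finset.sum_le_sum fun i _ => Finset.sum_le_sum fun j _ => ?_
    have hww : 0 ≤ w i * w j := mul_nonneg (hwpos i).le (hwpos j).le
    exact mul_le_mul_of_nonneg_left (pow_le_pow_left₀ (norm_nonneg _) (h2' i j) 2) hww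
  have step2 : ∑ i, w i * ‖b i‖^2 ≤ ∑ i, w i * ‖a i‖^2 := by
    refine Finset.sum_le_sum fun i _ => ?_
    exact mul_le_mul_of_nonneg_left (pow_le_pow_left₀ (norm_nonneg _) (h1' i) 2) (hwpos i).le
  have hCnn : 0 ≤ ‖∑ i, w i • b i‖^2 := by positivity
  have hC0 : ‖∑ i, w i • b i‖^2 = 0 := by linarith
  have hSab : ∑ i, w i * ‖a i‖^2 = ∑ i, w i * ‖b i‖^2 := by linarith
  have hc : ∑ i, w i • b i = 0 := by
    have := pow_eq_zero_iff (n := 2) (by norm_num) |>.1 hC0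
    exact norm_eq_zero.1 this
  -- individual leg equalities
  have hnorm : ∀ i, ‖a i‖ = ‖b i‖ := by
    have hzero : ∑ i, w i * (‖a i‖^2 - ‖b i‖^2) = 0 := by
      have he : ∀ i : Fin n, w i * (‖a i‖^2 - ‖b i‖^2)
          = w i * ‖a i‖^2 - w i * ‖b i‖^2 := fun i => by ring
      simp_rw [he]
      rw [Finset.sum_sub_distrib, hSab, sub_self]
    intro i
    have hnn : ∀ i ∈ Finset.univ, 0 ≤ w i * (‖a i‖^2 - ‖b i‖^2) := fun i _ =>
      mul_nonneg (hwpos i).le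
        (sub_nonneg.2 (pow_le_pow_left₀ (norm_nonneg _) (h1' i) 2))
    have := (Finset.sum_eq_zero_iff_of_nonneg hnn).1 hzero i (Finset.mem_univ i)
    have hsq : ‖a i‖^2 = ‖b i‖^2 := by
      have hw := (hwpos i).ne'
      have : ‖a i‖^2 - ‖b i‖^2 = 0 := by
        rcases mul_eq_zero.1 this with h | h
        · exact absurd h hw
        · exact h
      linarith
    have := congrArg Real.sqrt hsq
    rwa [Real.sqrt_sq (norm_nonneg _), Real.sqrt_sq (norm_nonneg _)] at this
  have hABsum : ∑ i, ∑ j, w i * w j * ‖b i - b j‖^2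
      = ∑ i, ∑ j, w i * w j * ‖a i - a j‖^2 := by
    rw [idA, idB, hC0, hSab]; ring
  have hdiff : ∀ i j, ‖a i - a j‖ = ‖b i - b j‖ := by
    have hzero : ∑ i, ∑ j, w i * w j * (‖b i - b j‖^2 - ‖a i - a j‖^2) = 0 := by
      have he : ∀ i j : Fin n, w i * w j * (‖b i - b j‖^2 - ‖a i - a j‖^2)
          = w i * w j * ‖b i - b j‖^2 - w i * w j * ‖a i - a j‖^2 := fun i j => by ring
      simp_rw [he, Finset.sum_sub_distrib]
      rw [hABsum, sub_self]
    have hnn : ∀ i j : Fin n, 0 ≤ w i * w j * (‖b i - b j‖^2 - ‖a i - a j‖^2) := fun i j =>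
      mul_nonneg (mul_nonneg (hwpos i).le (hwpos j).le)
        (sub_nonneg.2 (pow_le_pow_left₀ (norm_nonneg _) (h2' i j) 2))
    intro i j
    have houter := (Finset.sum_eq_zero_iff_of_nonneg
      (fun i _ => Finset.sum_nonneg fun j _ => hnn i j)).1 hzero i (Finset.mem_univ i)
    have hterm := (Finset.sum_eq_zero_iff_of_nonneg
      (fun j _ => hnn i j)).1 houter j (Finset.mem_univ j)
    have hsq : ‖a i - a j‖^2 = ‖b i - b j‖^2 := by
      have hw : w i * w j ≠ 0 := (mul_pos (hwpos i) (hwpos j)).ne'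
      have : ‖b i - b j‖^2 - ‖a i - a j‖^2 = 0 := by
        rcases mul_eq_zero.1 hterm with h | h
        · exact absurd h hw
        · exact h
      linarith
    have := congrArg Real.sqrt hsq
    rwa [Real.sqrt_sq (norm_nonneg _), Real.sqrt_sq (norm_nonneg _)] at this
  have hinner : ∀ i j, (inner ℝ (a i) (a j) : ℝ) = (inner ℝ (b i) (b j) : ℝ) := by
    intro i j
    have hA : (inner ℝ (a i) (a j) : ℝ) = (‖a i‖^2 + ‖a j‖^2 - ‖a i - a j‖^2)/2 := by
      have := norm_sub_sq_real (a i) (a j); linarith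
    have hB : (inner ℝ (b i) (b j) : ℝ) = (‖b i‖^2 + ‖b j‖^2 - ‖b i - b j‖^2)/2 := by
      have := norm_sub_sq_real (b i) (b j); linarith
    rw [hA, hB, hnorm i, hnorm j, hdiff i j]
  have hkey : ∀ δ : Fin n → ℝ, ‖∑ i, δ i • b i‖ = ‖∑ i, δ i • a i‖ := by
    intro δ
    have h₁ : ‖∑ i, δ i • b i‖^2 = ‖∑ i, δ i • a i‖^2 := by
      rw [cross_identity, cross_identity]
      exact Finset.sum_congr rfl fun i _ => Finset.sum_congr rfl fun j _ => by
        rw [hinner i j]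
    have := congrArg Real.sqrt h₁
    rwa [Real.sqrt_sq (norm_nonneg _), Real.sqrt_sq (norm_nonneg _)] at this
  refine ⟨fun i => by rw [hda i, hdb i, hnorm i],
    fun i j => by rw [hdaa i j, hdbb i j, hdiff i j], ?_⟩
  set K := convexHull ℝ (Set.range xt) with hKdef
  have hrep : ∀ y : F, y ∈ K → ∃ w' : Fin n → ℝ, (∀ i, 0 ≤ w' i) ∧ (∑ i, w' i) = 1 ∧
      ∑ i, w' i • xt i = y := fun y hy => (mem_convexHull_range_iff' xt y).1 hy
  choose! Wt hWt0 hWt1 hWtc using hrep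
  have haW : ∀ y ∈ K, ∑ i, Wt y i • a i = y - qt := by
    intro y hy
    have : ∑ i, Wt y i • a i = (∑ i, Wt y i • xt i) - (∑ i, Wt y i) • qt := by
      rw [Finset.sum_smul, ← Finset.sum_sub_distrib]
      refine Finset.sum_congr rfl fun i _ => ?_
      simp only [ha]; rw [smul_sub]
    rw [this, hWtc y hy, hWt1 y hy, one_smul]
  have hone : ∀ (v : Fin n → F) i, ∑ j, (if j = i then (1:ℝ) else 0) • v j = v i := by
    intro v i
    simp [ite_smul]
  have honeb : ∀ (v : Fin n → EuclideanSpace ℝ (Fin m)) i,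
      ∑ j, (if j = i then (1:ℝ) else 0) • v j = v i := by
    intro v i
    simp [ite_smul]
  refine ⟨fun y => if y ∈ K then p + ∑ i, Wt y i • b i else p, ?_, ?_, ?_⟩
  · intro y hy z hz
    simp only [if_pos hy, if_pos hz]
    rw [dist_eq_norm, dist_eq_norm, add_sub_add_left_eq_sub]
    have e1 : (∑ i, Wt y i • b i) - (∑ i, Wt z i • b i)
        = ∑ i, (Wt y i - Wt z i) • b i := by
      simp_rw [sub_smul]; rw [Finset.sum_sub_distrib]
    have e2 : ∑ i, (Wt y i - Wt z i) • a i = y - z := by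
      simp_rw [sub_smul]; rw [Finset.sum_sub_distrib, haW y hy, haW z hz,
        sub_sub_sub_cancel_right]
    rw [e1, hkey, e2]
  · intro i
    have hxtK : xt i ∈ K := subset_convexHull ℝ _ (Set.mem_range_self i)
    simp only [if_pos hxtK]
    have hδa : ∑ j, (Wt (xt i) j - (if j = i then 1 else 0)) • a j = 0 := by
      simp_rw [sub_smul]
      rw [Finset.sum_sub_distrib, haW _ hxtK, hone a i]
      simp only [ha]
      abel
    have hδb : ‖∑ j, (Wt (xt i) j - (if j = i then 1 else 0)) • b j‖ = 0 := by
      rw [hkey, hδa, norm_zero]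
    have e3 : ∑ j, (Wt (xt i) j - if j = i then 1 else 0) • b j
        = (∑ j, Wt (xt i) j • b j) - b i := by
      simp_rw [sub_smul]; rw [Finset.sum_sub_distrib, honeb b i]
    have hfin : ∑ j, Wt (xt i) j • b j = b i := by
      have h0 : ∑ j, (Wt (xt i) j - if j = i then 1 else 0) • b j = 0 := norm_eq_zero.1 hδb
      rw [e3] at h0
      exact sub_eq_zero.1 h0
    rw [hfin]
    simp only [hb]
    abel
  · have hqtK : qt ∈ K := intrinsicInterior_subset h3
    simp only [if_pos hqtK]
    have hz : ‖∑ j, Wt qt j • b j‖ = 0 := by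
      rw [hkey, haW qt hqtK, sub_self, norm_zero]
    rw [norm_eq_zero.1 hz, add_zero]
end
end

section
/- Let E be a real inner product space, s ⊆ E a convex set, q ∈ s, and f : E → ℝ. Assume that the function v ↦ f v − ½‖v‖² is concave on s, that f q = 0, and that f has Fréchet derivative 0 at q within s (HasFDerivWithinAt f 0 s q). Then f v ≤ ½‖v − q‖² for every v ∈ s. -/
noncomputable section

/-- If `v ↦ f v − ½‖v‖²` is concave on a convex set `s` (the condition `f'' ≤ 1`), and `f`
vanishes together with its derivative (within `s`) at a point `q ∈ s`, then `f` is bounded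
above on `s` by the model paraboloid `v ↦ ½‖v − q‖²`. -/
theorem le_paraboloid_of_concave
    {E : Type*} [NormedAddCommGroup E] [InnerProductSpace ℝ E]
    {s : Set E} (hs : Convex ℝ s) {q : E} (hq : q ∈ s) (f : E → ℝ)
    (hconc : ConcaveOn ℝ s (fun v => f v - ‖v‖ ^ 2 / 2))
    (hfq : f q = 0) (hderiv : HasFDerivWithinAt f (0 : E →L[ℝ] ℝ) s q) :
    ∀ v ∈ s, f v ≤ ‖v - q‖ ^ 2 / 2 := by
  intro v hv
  -- G = ‖·‖²/2 - f is convex on s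
  have hG : ConvexOn ℝ s (fun v => ‖v‖ ^ 2 / 2 - f v) := by
    have := hconc.neg
    have heq : (fun v : E => ‖v‖ ^ 2 / 2 - f v) = -fun v => f v - ‖v‖ ^ 2 / 2 := by
      funext w; simp [neg_sub]
    rw [heq]; exact this
  -- derivative of G at q within s
  have hGderiv : HasFDerivWithinAt (fun v : E => ‖v‖ ^ 2 / 2 - f v)
      ((2 : ℝ)⁻¹ • (2 • (innerSL ℝ q)) : E →L[ℝ] ℝ) s q := by
    have h1 : HasFDerivWithinAt (fun v : E => ‖v‖ ^ 2)
        ((2 • (innerSL ℝ q)) : E →L[ℝ] ℝ) s q :=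
      (hasStrictFDerivAt_norm_sq q).hasFDerivAt.hasFDerivWithinAt
    have h2 := (h1.const_smul (2 : ℝ)⁻¹).sub hderiv
    rw [sub_zero] at h2
    exact HasFDerivWithinAt.congr' h2 (fun w _ => by simp [div_eq_inv_mul]) hq
  -- the affine line from q to v
  set L : ℝ →ᵃ[ℝ] E := AffineMap.lineMap q v with hL
  set T : Set ℝ := L ⁻¹' s with hT
  have h0T : (0 : ℝ) ∈ T := by simp [hT, hL, AffineMap.lineMap_apply_zero, hq]
  have h1T : (1 : ℝ) ∈ T := by simp [hT, hL, AffineMap.lineMap_apply_one, hv]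
  set φ : ℝ → ℝ := (fun v => ‖v‖ ^ 2 / 2 - f v) ∘ L with hφ
  have hφconv : ConvexOn ℝ T φ := hG.comp_affineMap L
  -- L has derivative v - q, and maps T into s
  have hLd : HasDerivWithinAt (fun t : ℝ => L t) (v - q) T 0 := by
    have : HasDerivAt (fun t : ℝ => q + t • (v - q)) (v - q) 0 := by
      simpa using ((hasDerivAt_id (0 : ℝ)).smul_const (v - q)).const_add q
    refine this.hasDerivWithinAt.congr (fun t _ => ?_) ?_ <;>
      simp [hL, AffineMap.lineMap_apply, add_comm]
  have hLmaps : Set.MapsTo (fun t : ℝ => L t) T s := fun t ht => ht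
  have hL0 : L (0 : ℝ) = q := by simp [hL]
  have hφd : HasDerivWithinAt φ
      (((2 : ℝ)⁻¹ • (2 • (innerSL ℝ q)) : E →L[ℝ] ℝ) (v - q)) T 0 := by
    have hGd' : HasFDerivWithinAt (fun v : E => ‖v‖ ^ 2 / 2 - f v)
        ((2 : ℝ)⁻¹ • (2 • (innerSL ℝ q)) : E →L[ℝ] ℝ) s (L 0) := hL0 ▸ hGderiv
    have h := hGd'.comp_hasDerivWithinAt (x := (0 : ℝ)) hLd hLmaps
    simpa [hφ] using h
  -- slope inequality
  have hslope := hφconv.le_slope_of_hasDerivWithinAt h0T h1T one_pos hφd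
  have hφ0 : φ 0 = ‖q‖ ^ 2 / 2 := by simp [hφ, hL, hfq]
  have hφ1 : φ 1 = ‖v‖ ^ 2 / 2 - f v := by simp [hφ, hL]
  rw [slope_def_field, hφ1, hφ0] at hslope
  have hval : (((2 : ℝ)⁻¹ • (2 • (innerSL ℝ q)) : E →L[ℝ] ℝ) (v - q))
      = inner ℝ q (v - q) := by
    simp [ContinuousLinearMap.smul_apply, two_smul, smul_eq_mul]
    ring
  rw [hval] at hslope
  -- expand ‖v - q‖²
  have hexp : ‖v - q‖ ^ 2 = ‖v‖ ^ 2 - 2 * inner ℝ v q + ‖q‖ ^ 2 := by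
    simpa using @norm_sub_sq_real E _ _ v q
  have hinner : (inner ℝ q (v - q) : ℝ) = inner ℝ v q - ‖q‖ ^ 2 := by
    rw [inner_sub_right, real_inner_self_eq_norm_sq, real_inner_comm]
  rw [hinner] at hslope
  have : f v ≤ ‖v‖ ^ 2 / 2 - inner ℝ v q + ‖q‖ ^ 2 / 2 := by linarith
  linarith [hexp, this]
end
end
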